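/- If a > 8, then there exists a unique σ_a ∈ (0,1/2) with f_a(σ_a) = 1 − σ_a (so {σ_a, 1 − σ_a} is a periodic orbit of f_a of period 2), and for every x ∈ (0,1) outside a countable set, the even and odd subsequences of iterates of x converge to σ_a and 1 − σ_a (in one of the two orders); every x in the exceptional countable set satisfies f_a^n(x) = 1/2 for some n. -/

import Mathlib

open Real Set Filter Topology

/-- The map `f_{a,b}(x) = x / (x + (1-x) * exp (a (x - b)))`. -/
noncomputable def chaosMap (a b : ℝ) : ℝ → ℝ :=
  fun x => x / (x + (1 - x) * Real.exp (a * (x - b)))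

namespace Chaos


/-- sigmoid -/
noncomputable def Ef (y : ℝ) : ℝ := (1 + Real.exp (-y))⁻¹

/-- derivative of sigmoid -/
noncomputable def Ed (y : ℝ) : ℝ := Ef y * (1 - Ef y)

/-- the conjugated map -/
noncomputable def Hf (a y : ℝ) : ℝ := a * Ef y - a / 2 - y

/-- logit -/
noncomputable def Lf (x : ℝ) : ℝ := Real.log (x / (1 - x))

lemma den_pos (y : ℝ) : 0 < 1 + Real.exp (-y) := by positivity

lemma Ef_pos (y : ℝ) : 0 < Ef y := by unfold Ef; positivity

lemma Ef_lt_one (y : ℝ) : Ef y < 1 := by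
  rw [Ef, inv_lt_one_iff₀]
  right; linarith [Real.exp_pos (-y)]

lemma Ef_strictMono : StrictMono Ef := by
  intro x y hxy
  rw [Ef, Ef]
  apply inv_strictAnti₀ (den_pos y)
  have := Real.exp_lt_exp.2 (neg_lt_neg hxy)
  linarith

lemma Ef_inj : Function.Injective Ef := Ef_strictMono.injective

lemma Ef_zero : Ef 0 = 1/2 := by norm_num [Ef]

lemma Ef_neg (y : ℝ) : Ef (-y) = 1 - Ef y := by
  rw [Ef, Ef, neg_neg]
  have h1 := den_pos y
  have h2 := den_pos (-y)
  have hy := Real.exp_pos y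
  have hny := Real.exp_pos (-y)
  have key : Real.exp y * Real.exp (-y) = 1 := by
    rw [← Real.exp_add]; simp
  field_simp
  nlinarith [key]

lemma Ef_cont : Continuous Ef := by
  apply Continuous.inv₀
  · exact continuous_const.add (Real.continuous_exp.comp continuous_neg)
  · intro x; positivity

lemma Ef_hasDeriv (y : ℝ) : HasDerivAt Ef (Ed y) y := by
  have h1 : HasDerivAt (fun y : ℝ => 1 + Real.exp (-y)) (-Real.exp (-y)) y := by
    simpa using ((Real.hasDerivAt_exp (-y)).comp y (hasDerivAt_neg y)).const_add 1
  have h2 := h1.inv (by positivity : (1:ℝ) + Real.exp (-y) ≠ 0)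
  refine HasDerivAt.congr_deriv h2 ?_
  have hd := den_pos y
  rw [Ed, Ef]
  field_simp
  ring

lemma Ed_pos (y : ℝ) : 0 < Ed y := by
  have := Ef_pos y; have := Ef_lt_one y
  rw [Ed]; nlinarith

lemma Ed_even (y : ℝ) : Ed (-y) = Ed y := by rw [Ed, Ed, Ef_neg]; ring

lemma Ed_zero : Ed 0 = 1/4 := by norm_num [Ed, Ef_zero]

lemma Ef_half_le {y : ℝ} (hy : 0 ≤ y) : 1/2 ≤ Ef y := by
  rcases eq_or_lt_of_le hy with h | h
  · rw [← h, Ef_zero]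
  · exact le_of_lt (Ef_zero ▸ Ef_strictMono h)

lemma Ed_strictAntiOn : StrictAntiOn Ed (Ici 0) := by
  intro u hu v hv huv
  have h1 : Ef u < Ef v := Ef_strictMono huv
  have h2 : 1/2 ≤ Ef u := Ef_half_le hu
  have h4 := Ef_lt_one v
  rw [Ed, Ed]
  nlinarith

lemma Ed_le_exp {y : ℝ} (hy : 0 ≤ y) : Ed y ≤ Real.exp (-y) := by
  have h1 := Ef_pos y
  have h2 := Ef_lt_one y
  have h3 : Ed y ≤ 1 - Ef y := by rw [Ed]; nlinarith
  have h4 : 1 - Ef y ≤ Real.exp (-y) := by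
    have hd := den_pos y
    have he := Real.exp_pos (-y)
    have hE : Ef y * (1 + Real.exp (-y)) = 1 := by
      rw [Ef]; field_simp
    nlinarith [Ef_pos y]
  linarith

lemma Ed_cont : Continuous Ed := (Ef_cont).mul (continuous_const.sub Ef_cont)

lemma Hf_cont (a : ℝ) : Continuous (Hf a) := by
  unfold Hf
  exact ((continuous_const.mul Ef_cont).sub continuous_const).sub continuous_id

lemma Hf_hasDeriv (a y : ℝ) : HasDerivAt (Hf a) (a * Ed y - 1) y := by
  exact (((Ef_hasDeriv y).const_mul a).sub_const (a/2)).sub (hasDerivAt_id y)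

lemma Hf_zero (a : ℝ) : Hf a 0 = 0 := by rw [Hf, Ef_zero]; ring

lemma Hf_odd (a y : ℝ) : Hf a (-y) = -Hf a y := by rw [Hf, Hf, Ef_neg]; ring

lemma Ef_Lf {x : ℝ} (hx : x ∈ Ioo (0:ℝ) 1) : Ef (Lf x) = x := by
  obtain ⟨h0, h1⟩ := hx
  have hq : 0 < x / (1 - x) := div_pos h0 (by linarith)
  rw [Ef, Lf, ← Real.log_inv, Real.exp_log (by positivity)]
  field_simp
  ring

lemma Lf_Ef (y : ℝ) : Lf (Ef y) = y := by
  have h1 := Ef_pos y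
  have h2 := Ef_lt_one y
  have key : Ef y / (1 - Ef y) = Real.exp y := by
    rw [Ef]
    have hd := den_pos y
    have key2 : Real.exp y * Real.exp (-y) = 1 := by rw [← Real.exp_add]; simp
    field_simp
    nlinarith
  rw [Lf, key, Real.log_exp]



lemma cluster_of_subseq {w : ℕ → ℝ} {φ : ℕ → ℕ} (hφ : StrictMono φ) {z : ℝ}
    (h : Tendsto (w ∘ φ) atTop (𝓝 z)) : MapClusterPt z atTop w := by
  rw [mapClusterPt_iff_frequently]
  intro s hs
  rw [frequently_atTop]
  intro N
  obtain ⟨K, hK⟩ := eventually_atTop.mp (h hs)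
  refine ⟨φ (max N K), le_trans (le_max_left N K) (hφ.le_apply), ?_⟩
  exact hK (max N K) (le_max_right N K)

lemma tendsto_of_cluster_unique {w : ℕ → ℝ} {lo hi L : ℝ} (hmem : ∀ n, w n ∈ Icc lo hi)
    (hz : ∀ z, MapClusterPt z atTop w → z = L) : Tendsto w atTop (𝓝 L) := by
  by_contra hcon
  rw [Metric.tendsto_atTop] at hcon
  push_neg at hcon
  obtain ⟨ε, hε, hfreq⟩ := hcon
  have hfreq' : ∃ᶠ n in atTop, ε ≤ dist (w n) L := frequently_atTop.mpr hfreq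
  obtain ⟨φ, hφ, hφp⟩ := extraction_of_frequently_atTop hfreq'
  obtain ⟨b, _, θ, hθ, hbt⟩ :=
    tendsto_subseq_of_bounded (Metric.isBounded_Icc lo hi) (fun k => hmem (φ k))
  have hbL : b = L := hz b (cluster_of_subseq (hφ.comp hθ) hbt)
  have hdist : Tendsto (fun j => dist (w (φ (θ j))) L) atTop (𝓝 (dist b L)) :=
    ((continuous_id.dist continuous_const).tendsto b).comp hbt
  have hge : ε ≤ dist b L :=
    ge_of_tendsto hdist (Eventually.of_forall fun j => hφp (θ j))
  rw [hbL] at hge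
  simp at hge
  linarith



lemma family {a b : ℝ} (ha : 8 < a) (hb1 : 1 ≤ b) (hb2 : b ≤ 2) :
    ∃ c r : ℝ, 0 < c ∧ c < r ∧ a * Ed c = b ∧
      (∀ y, 0 < y → y < r → 0 < a * Ef y - a/2 - b*y) ∧
      (a * Ef r - a/2 - b*r = 0) ∧
      (∀ y, r < y → a * Ef y - a/2 - b*y < 0) ∧
      StrictMonoOn (fun y => a * Ef y - a/2 - b*y) (Set.Icc 0 c) ∧
      StrictAntiOn (fun y => a * Ef y - a/2 - b*y) (Set.Ici c) := by
  have ha0 : (0:ℝ) < a := by linarith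
  set φ : ℝ → ℝ := fun y => a * Ed y - b with hφ
  set A : ℝ := Real.log a + 1 with hA
  have hA0 : 0 < A := by
    have := Real.log_pos (by linarith : (1:ℝ) < a)
    linarith
  have hφ0 : 0 < φ 0 := by
    simp only [hφ, Ed_zero]
    linarith
  have hφA : φ A < 0 := by
    have h1 : Ed A ≤ Real.exp (-A) := Ed_le_exp (le_of_lt hA0)
    have h2 : Real.exp (-A) = Real.exp (-1) / a := by
      rw [hA, neg_add, Real.exp_add, Real.exp_neg (Real.log a), Real.exp_log ha0]
      ring
    have h3 : Real.exp (-1) < 1 := Real.exp_lt_one_iff.mpr (by norm_num)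
    have : a * Ed A ≤ Real.exp (-1) := by
      rw [h2] at h1
      calc a * Ed A ≤ a * (Real.exp (-1)/a) := by nlinarith [Ed_pos A]
        _ = Real.exp (-1) := by field_simp
    simp only [hφ]; linarith
  have hφcont : Continuous φ := (continuous_const.mul Ed_cont).sub continuous_const
  -- get c
  have hIVT1 : (0:ℝ) ∈ Ioo (φ A) (φ 0) := ⟨hφA, hφ0⟩
  obtain ⟨c, hcmem, hc0⟩ := intermediate_value_Ioo' (le_of_lt hA0) hφcont.continuousOn hIVT1
  have hEdc : a * Ed c = b := by
    have : φ c = 0 := hc0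
    simp only [hφ] at this; linarith
  have hcpos : 0 < c := hcmem.1
  -- deriv sign
  have hderivpos : ∀ y : ℝ, 0 ≤ y → y < c → 0 < a * Ed y - b := by
    intro y h0 hyc
    have : Ed c < Ed y := Ed_strictAntiOn h0 (le_of_lt (lt_of_le_of_lt h0 hyc)) hyc
    nlinarith
  have hderivneg : ∀ y : ℝ, c < y → a * Ed y - b < 0 := by
    intro y hyc
    have : Ed y < Ed c := Ed_strictAntiOn (le_of_lt hcpos) (le_of_lt (lt_trans hcpos hyc)) hyc
    nlinarith
  set F : ℝ → ℝ := fun y => a * Ef y - a/2 - b*y with hF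
  have hFd : ∀ y : ℝ, HasDerivAt F (a * Ed y - b) y := by
    intro y
    refine HasDerivAt.congr_deriv ((((Ef_hasDeriv y).const_mul a).sub_const (a/2)).sub ((hasDerivAt_id y).const_mul b)) ?_
    ring
  have hFcont : Continuous F :=
    ((continuous_const.mul Ef_cont).sub continuous_const).sub (continuous_const.mul continuous_id)
  have hFmono : StrictMonoOn F (Set.Icc 0 c) := by
    apply strictMonoOn_of_deriv_pos (convex_Icc 0 c) hFcont.continuousOn
    intro y hy
    rw [interior_Icc] at hy
    rw [(hFd y).deriv]
    exact hderivpos y (le_of_lt hy.1) hy.2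
  have hFanti : StrictAntiOn F (Set.Ici c) := by
    apply strictAntiOn_of_deriv_neg (convex_Ici c) hFcont.continuousOn
    intro y hy
    rw [interior_Ici] at hy
    rw [(hFd y).deriv]
    exact hderivneg y hy
  have hF0 : F 0 = 0 := by simp only [hF, Ef_zero]; ring
  have hFc : 0 < F c := by
    have := hFmono (left_mem_Icc.2 (le_of_lt hcpos)) (right_mem_Icc.2 (le_of_lt hcpos)) hcpos
    rw [hF0] at this; exact this
  set Z : ℝ := c + a with hZ
  have hFZ : F Z < 0 := by
    have h1 : Ef Z < 1 := Ef_lt_one Z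
    have : (0:ℝ) < Z := by linarith
    simp only [hF]
    nlinarith
  have hcZ : c ≤ Z := by linarith
  have hIVT2 : (0:ℝ) ∈ Ioo (F Z) (F c) := ⟨hFZ, hFc⟩
  obtain ⟨r, hrmem, hr0⟩ := intermediate_value_Ioo' hcZ hFcont.continuousOn hIVT2
  have hcr : c < r := hrmem.1
  refine ⟨c, r, hcpos, hcr, hEdc, ?_, hr0, ?_, hFmono, hFanti⟩
  · intro y hy0 hyr
    show 0 < F y
    rcases le_or_gt y c with h | h
    · have := hFmono (left_mem_Icc.2 (le_of_lt hcpos)) ⟨le_of_lt hy0, h⟩ hy0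
      rw [hF0] at this; exact this
    · have := hFanti (mem_Ici.2 (le_of_lt h)) (mem_Ici.2 (le_of_lt hcr)) hyr
      rw [hr0] at this; exact this
  · intro y hry
    show F y < 0
    have := hFanti (mem_Ici.2 (le_of_lt hcr)) (mem_Ici.2 (le_of_lt (lt_trans hcr hry))) hry
    rw [hr0] at this; exact this



lemma no2 {a p q : ℝ} (ha : 0 < a) (h1 : Hf a p = q) (h2 : Hf a q = p) : p = q := by
  unfold Hf at h1 h2
  have h3 : a * Ef p = a * Ef q := by linarith
  exact Ef_inj (mul_left_cancel₀ (ne_of_gt ha) h3)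

lemma Hf_abs_le {a : ℝ} (ha : 0 < a) (y : ℝ) : |Hf a y| ≤ max |y| (a/2) := by
  have key : ∀ z : ℝ, 0 ≤ z → |Hf a z| ≤ max |z| (a/2) := by
    intro z hz
    have h1 : Hf a z ≤ a/2 := by
      have := Ef_lt_one z
      unfold Hf; nlinarith
    have h2 : -z ≤ Hf a z := by
      have := Ef_half_le hz
      unfold Hf; nlinarith
    rw [abs_le]
    constructor
    · rw [abs_of_nonneg hz]
      have : -(max z (a/2)) ≤ -z := by
        simp only [neg_le_neg_iff]; exact le_max_left _ _
      linarith
    · exact le_trans h1 (le_max_right _ _)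
  rcases le_or_gt 0 y with h | h
  · exact key y h
  · have h1 : |Hf a y| = |Hf a (-y)| := by
      rw [← neg_neg y, Hf_odd, abs_neg, neg_neg]
    have h2 := key (-y) (by linarith)
    rw [abs_neg] at h2
    rw [h1]; exact h2

lemma Hf_abs_abs (a y : ℝ) : |Hf a y| = |Hf a (|y|)| := by
  rcases le_or_gt 0 y with h | h
  · rw [abs_of_nonneg h]
  · rw [abs_of_neg h, ← neg_neg y]
    rw [Hf_odd, abs_neg, neg_neg]

structure Setup (a : ℝ) where
  c : ℝ
  ys : ℝ
  u0 : ℝ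
  hc0 : 0 < c
  hcu : c < u0
  hys0 : 0 < ys
  hysu : ys < u0
  hfix : Hf a ys = ys
  hkpos : ∀ y, 0 < y → y < ys → y < Hf a y
  hkneg : ∀ y, ys < y → Hf a y < y
  hHpos : ∀ y, 0 < y → y < u0 → 0 < Hf a y
  hHu0 : Hf a u0 = 0
  hHneg : ∀ y, u0 < y → Hf a y < 0
  hmono : StrictMonoOn (Hf a) (Icc 0 c)
  hanti : StrictAntiOn (Hf a) (Ici c)
  hD : ∀ t, 0 < t → t < ys → t < Hf a (Hf a t)

lemma exists_setup {a : ℝ} (ha : 8 < a) : Nonempty (Setup a) := by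
  have ha0 : (0:ℝ) < a := by linarith
  obtain ⟨c, u0, hc0, hcu, _, hHpos', hHu0', hHneg', hmono', hanti'⟩ :=
    family ha le_rfl (by norm_num)
  obtain ⟨c2, ys, hc20, hc2ys, _, hkpos', hkfix', hkneg', _, _⟩ :=
    family ha (by norm_num) le_rfl
  have hfun1 : (fun y => a * Ef y - a/2 - 1*y) = Hf a := by
    funext y; unfold Hf; ring
  rw [hfun1] at hmono' hanti'
  have hys0 : 0 < ys := lt_trans hc20 hc2ys
  have hHpos : ∀ y, 0 < y → y < u0 → 0 < Hf a y := by
    intro y h1 h2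
    have := hHpos' y h1 h2; unfold Hf; linarith
  have hHu0 : Hf a u0 = 0 := by unfold Hf; linarith
  have hHneg : ∀ y, u0 < y → Hf a y < 0 := by
    intro y h; have := hHneg' y h; unfold Hf; linarith
  have hfix : Hf a ys = ys := by unfold Hf; linarith
  have hkpos : ∀ y, 0 < y → y < ys → y < Hf a y := by
    intro y h1 h2; have := hkpos' y h1 h2; unfold Hf; linarith
  have hkneg : ∀ y, ys < y → Hf a y < y := by
    intro y h; have := hkneg' y h; unfold Hf; linarith
  have hysu : ys < u0 := by
    rcases lt_trichotomy ys u0 with h | h | h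
    · exact h
    · exfalso; rw [h] at hfix; rw [hHu0] at hfix; linarith [h ▸ hys0]
    · exfalso; have := hHneg ys h; linarith
  -- no fixed points other than ys in (0, ∞), needed for hD
  have hD : ∀ t, 0 < t → t < ys → t < Hf a (Hf a t) := by
    intro t ht0 htys
    -- the second iterate has slope (a/4-1)^2 > 1 at 0
    have hHH0 : Hf a (Hf a 0) = 0 := by rw [Hf_zero, Hf_zero]
    have hchain : HasDerivAt (fun z => Hf a (Hf a z)) ((a * Ed 0 - 1) * (a * Ed 0 - 1)) 0 := by
      have h1 := Hf_hasDeriv a 0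
      have h2 : HasDerivAt (Hf a) (a * Ed 0 - 1) (Hf a 0) := by
        rw [Hf_zero]; exact Hf_hasDeriv a 0
      exact HasDerivAt.comp 0 h2 h1
    have hslope : Tendsto (slope (fun z => Hf a (Hf a z)) 0) (𝓝[≠] 0)
        (𝓝 ((a * Ed 0 - 1) * (a * Ed 0 - 1))) :=
      hasDerivAt_iff_tendsto_slope.mp hchain
    have hgt1 : 1 < (a * Ed 0 - 1) * (a * Ed 0 - 1) := by
      rw [Ed_zero]; nlinarith
    have hev : ∀ᶠ z in 𝓝[≠] (0:ℝ), 1 < slope (fun z => Hf a (Hf a z)) 0 z :=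
      hslope.eventually (eventually_gt_nhds hgt1)
    have hmon : 𝓝[>] (0:ℝ) ≤ 𝓝[≠] (0:ℝ) :=
      nhdsWithin_mono 0 (fun x hx => ne_of_gt hx)
    have hev2 : ∀ᶠ z in 𝓝[>] (0:ℝ), 1 < slope (fun z => Hf a (Hf a z)) 0 z := hmon hev
    have hev3 : ∀ᶠ z in 𝓝[>] (0:ℝ), z < ys := by
      filter_upwards [Ioo_mem_nhdsGT_of_mem (⟨le_refl 0, hys0⟩ : (0:ℝ) ∈ Ico 0 ys)]
      intro z hz; exact hz.2
    obtain ⟨t0, hslope_t0, ht0ys, ht0pos⟩ :=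
      (hev2.and (hev3.and eventually_mem_nhdsWithin)).exists
    have ht0pos' : (0:ℝ) < t0 := ht0pos
    have hDt0 : t0 < Hf a (Hf a t0) := by
      have : slope (fun z => Hf a (Hf a z)) 0 t0 = Hf a (Hf a t0) / t0 := by
        rw [slope_def_field, hHH0]; simp
      rw [this] at hslope_t0
      have := (one_lt_div ht0pos').mp hslope_t0
      linarith
    -- no solutions of H(H z) = z with 0 < z < ys
    have hne : ∀ z, 0 < z → z < ys → Hf a (Hf a z) ≠ z := by
      intro z h1 h2 heq
      have : z = Hf a z := no2 ha0 rfl heq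
      have := hkpos z h1 h2
      linarith
    by_contra hcon
    push_neg at hcon
    have hDt : Hf a (Hf a t) < t :=
      lt_of_le_of_ne hcon (hne t ht0 htys)
    have hcontD : Continuous (fun z => Hf a (Hf a z) - z) :=
      ((Hf_cont a).comp (Hf_cont a)).sub continuous_id
    rcases lt_trichotomy t t0 with h | h | h
    · have hivt : (0:ℝ) ∈ Ioo ((fun z => Hf a (Hf a z) - z) t) ((fun z => Hf a (Hf a z) - z) t0) := by
        refine ⟨?_, ?_⟩
        · show Hf a (Hf a t) - t < 0; linarith
        · show 0 < Hf a (Hf a t0) - t0; linarith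
      obtain ⟨z, hzmem, hz0⟩ := intermediate_value_Ioo (le_of_lt h) hcontD.continuousOn hivt
      have hz0' : Hf a (Hf a z) - z = 0 := hz0
      have hz1 : 0 < z := lt_trans ht0 hzmem.1
      have hz2 : z < ys := lt_trans hzmem.2 ht0ys
      exact hne z hz1 hz2 (by linarith)
    · rw [h] at hDt; linarith
    · have hivt : (0:ℝ) ∈ Ioo ((fun z => Hf a (Hf a z) - z) t) ((fun z => Hf a (Hf a z) - z) t0) := by
        refine ⟨?_, ?_⟩
        · show Hf a (Hf a t) - t < 0; linarith
        · show 0 < Hf a (Hf a t0) - t0; linarith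
      obtain ⟨z, hzmem, hz0⟩ := intermediate_value_Ioo' (le_of_lt h) hcontD.continuousOn hivt
      have hz0' : Hf a (Hf a z) - z = 0 := hz0
      have hz1 : 0 < z := lt_trans ht0pos' hzmem.1
      have hz2 : z < ys := lt_trans hzmem.2 htys
      exact hne z hz1 hz2 (by linarith)
  exact ⟨⟨c, ys, u0, hc0, hcu, hys0, hysu, hfix, hkpos, hkneg, hHpos, hHu0, hHneg,
    hmono', hanti', hD⟩⟩



/-- upper bound: Hf stays below u0 on (0,u0) -/
lemma Hf_lt_u0 {a : ℝ} (ha : 8 < a) (S : Setup a) :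
    ∀ y, 0 ≤ y → y < S.u0 → Hf a y < S.u0 := by
  intro y h1 h2
  have hE : Ef y < Ef S.u0 := Ef_strictMono h2
  have h3 := S.hHu0
  have ha0 : (0:ℝ) < a := by linarith
  unfold Hf at h3 ⊢
  nlinarith

lemma core {a : ℝ} (ha : 8 < a) (S : Setup a) {s : ℕ → ℝ}
    (hs : ∀ n, s (n+1) = Hf a (s n)) (hmem : ∀ n, 0 < s n ∧ s n < S.u0) :
    Tendsto s atTop (𝓝 S.ys) := by
  have hcont := Hf_cont a
  set β := Hf a S.c with hβ
  have hβpos : 0 < β := S.hHpos _ S.hc0 S.hcu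
  have hβu : β < S.u0 := Hf_lt_u0 ha S _ S.hc0.le S.hcu
  have hmax : ∀ t, 0 ≤ t → Hf a t ≤ β := by
    intro t ht
    rcases le_or_gt t S.c with h | h
    · exact S.hmono.monotoneOn ⟨ht, h⟩ ⟨S.hc0.le, le_rfl⟩ h
    · exact le_of_lt (S.hanti (mem_Ici.2 le_rfl) (mem_Ici.2 h.le) h)
  have hysβ : S.ys ≤ β := by
    have := hmax S.ys S.hys0.le
    rw [S.hfix] at this; exact this
  obtain ⟨pt, hptmem, hptmin⟩ :=
    isCompact_Icc.exists_isMinOn (nonempty_Icc.2 hysβ) hcont.continuousOn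
  set ν := Hf a pt with hν
  have hνpos : 0 < ν :=
    S.hHpos pt (lt_of_lt_of_le S.hys0 hptmem.1) (lt_of_le_of_lt hptmem.2 hβu)
  have hνys : ν ≤ S.ys := by
    have := isMinOn_iff.mp hptmin S.ys ⟨le_rfl, hysβ⟩
    rw [S.hfix] at this; exact this
  set δ := min (s 1) ν with hδ
  have hδpos : 0 < δ := lt_min (hmem 1).1 hνpos
  have hδys : δ ≤ S.ys := le_trans (min_le_right _ _) hνys
  have htrap : ∀ k, δ ≤ s (k+1) ∧ s (k+1) ≤ β := by
    intro k; induction k with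
    | zero => exact ⟨min_le_left _ _, by rw [hs 0]; exact hmax _ (hmem 0).1.le⟩
    | succ n ih =>
      have h1 : s (n+2) = Hf a (s (n+1)) := hs (n+1)
      constructor
      · rcases lt_trichotomy (s (n+1)) S.ys with h | h | h
        · have := S.hkpos _ (hmem (n+1)).1 h
          rw [h1]; linarith [ih.1]
        · rw [h1, h, S.hfix]; exact hδys
        · have : ν ≤ Hf a (s (n+1)) := isMinOn_iff.mp hptmin _ ⟨h.le, ih.2⟩
          rw [h1]; linarith [min_le_right (s 1) ν]
      · rw [h1]; exact hmax _ (hmem (n+1)).1.le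
  set w : ℕ → ℝ := fun k => s (k+1) with hw
  have hwmem : ∀ k, w k ∈ Icc δ β := fun k => ⟨(htrap k).1, (htrap k).2⟩
  have hwstep : ∀ k, w (k+1) = Hf a (w k) := fun k => hs (k+1)
  have hwpos : ∀ k, 0 < w k := fun k => (hmem (k+1)).1
  suffices hW : Tendsto w atTop (𝓝 S.ys) by
    exact (tendsto_add_atTop_iff_nat 1).mp hW
  rcases le_or_gt S.ys S.c with hAB | hAB
  -- CASE A : ys ≤ c, monotone arguments
  · by_cases hex : ∃ k, w k ≤ S.ys
    · obtain ⟨k0, hk0⟩ := hex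
      have hinv : ∀ j, w (k0 + j) ≤ S.ys := by
        intro j; induction j with
        | zero => simpa using hk0
        | succ n ih =>
          have hstep : w (k0 + (n+1)) = Hf a (w (k0+n)) := hwstep _
          have hm : Hf a (w (k0+n)) ≤ Hf a S.ys :=
            S.hmono.monotoneOn ⟨(hwpos _).le, le_trans ih hAB⟩ ⟨S.hys0.le, hAB⟩ ih
          rw [hstep, ← S.hfix]; exact hm
      have hmono_orb : ∀ j, w (k0+j) ≤ w (k0+j+1) := by
        intro j
        rcases eq_or_lt_of_le (hinv j) with h | h
        · have : w (k0+j+1) = S.ys := by rw [hwstep, h, S.hfix]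
          rw [this, h]
        · rw [hwstep]; exact (S.hkpos _ (hwpos _) h).le
      set v : ℕ → ℝ := fun j => w (k0 + j) with hv
      have hvmono : Monotone v := monotone_nat_of_le_succ (fun j => hmono_orb j)
      have hvbdd : BddAbove (Set.range v) := ⟨S.ys, by rintro x ⟨j, rfl⟩; exact hinv j⟩
      have hvconv := tendsto_atTop_ciSup hvmono hvbdd
      set L := ⨆ j, v j with hL
      have hLfix : Hf a L = L := by
        have h1 : Tendsto (fun j => v (j+1)) atTop (𝓝 L) :=
          (tendsto_add_atTop_iff_nat 1).mpr hvconv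
        have h2 : Tendsto (fun j => Hf a (v j)) atTop (𝓝 (Hf a L)) :=
          (hcont.tendsto L).comp hvconv
        have h3 : (fun j => v (j+1)) = fun j => Hf a (v j) := by
          funext j
          show w (k0 + (j+1)) = Hf a (w (k0+j))
          exact hwstep _
        rw [h3] at h1
        exact tendsto_nhds_unique h2 h1
      have hL0 : 0 < L := lt_of_lt_of_le (hwpos k0) (by
        have : v 0 ≤ L := le_ciSup hvbdd 0
        simpa using this)
      have hLys : L ≤ S.ys := ciSup_le (fun j => hinv j)
      have hLeq : L = S.ys := by
        rcases eq_or_lt_of_le hLys with h | h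
        · exact h
        · exfalso; have := S.hkpos L hL0 h; linarith
      rw [hLeq] at hvconv
      have hcomm : (fun j => w (j + k0)) = v := by
        funext j; show w (j + k0) = w (k0 + j); rw [Nat.add_comm]
      exact (tendsto_add_atTop_iff_nat k0).mp (by rw [hcomm]; exact hvconv)
    · push_neg at hex
      have hdec : ∀ k, w (k+1) ≤ w k := fun k => by
        rw [hwstep]; exact (S.hkneg _ (hex k)).le
      have hvanti : Antitone w := antitone_nat_of_succ_le hdec
      have hbdd : BddBelow (range w) := ⟨S.ys, by rintro x ⟨k, rfl⟩; exact (hex k).le⟩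
      have hconv := tendsto_atTop_ciInf hvanti hbdd
      set L := ⨅ k, w k with hL
      have hLfix : Hf a L = L := by
        have h1 : Tendsto (fun j => w (j+1)) atTop (𝓝 L) :=
          (tendsto_add_atTop_iff_nat 1).mpr hconv
        have h2 : Tendsto (fun j => Hf a (w j)) atTop (𝓝 (Hf a L)) :=
          (hcont.tendsto L).comp hconv
        have h3 : (fun j => w (j+1)) = fun j => Hf a (w j) := by
          funext j; exact hwstep j
        rw [h3] at h1
        exact tendsto_nhds_unique h2 h1
      have hLys : S.ys ≤ L := le_ciInf (fun k => (hex k).le)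
      have hLeq : L = S.ys := by
        rcases eq_or_lt_of_le hLys with h | h
        · exact h.symm
        · exfalso; have := S.hkneg L h; linarith
      rw [hLeq] at hconv; exact hconv
  -- CASE B : c < ys, omega-limit argument
  · set Ω : Set ℝ := {z : ℝ | MapClusterPt z atTop w} with hΩ
    have hΩIcc : Ω ⊆ Icc δ β := by
      intro z hz
      obtain ⟨ψ, hψ, hψt⟩ := TopologicalSpace.FirstCountableTopology.tendsto_subseq hz
      exact isClosed_Icc.mem_of_tendsto hψt (Eventually.of_forall fun k => hwmem _)
    have hneΩ : Ω.Nonempty := by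
      obtain ⟨b, _, φ, hφ, hbt⟩ :=
        tendsto_subseq_of_bounded (Metric.isBounded_Icc δ β) (fun n => hwmem n)
      exact ⟨b, cluster_of_subseq hφ hbt⟩
    have hforward : ∀ z ∈ Ω, Hf a z ∈ Ω := by
      intro z hz
      obtain ⟨ψ, hψ, hψt⟩ := TopologicalSpace.FirstCountableTopology.tendsto_subseq hz
      have h2 : Tendsto (fun k => Hf a (w (ψ k))) atTop (𝓝 (Hf a z)) :=
        (hcont.tendsto z).comp hψt
      have h3 : (fun k => Hf a (w (ψ k))) = w ∘ (fun k => ψ k + 1) := by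
        funext k; exact (hwstep (ψ k)).symm
      rw [h3] at h2
      exact cluster_of_subseq (fun i j hij => by have := hψ hij; omega) h2
    have hbackward : ∀ z ∈ Ω, ∃ v ∈ Ω, Hf a v = z := by
      intro z hz
      obtain ⟨ψ, hψ, hψt⟩ := TopologicalSpace.FirstCountableTopology.tendsto_subseq hz
      set p : ℕ → ℕ := fun k => ψ (k+1) - 1 with hp
      have hψ1 : ∀ k, 1 ≤ ψ (k+1) := fun k => le_trans (Nat.succ_le_succ (Nat.zero_le k)) (hψ.le_apply)
      have hp1 : ∀ k, p k + 1 = ψ (k+1) := fun k => Nat.succ_pred_eq_of_pos (hψ1 k)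
      have hpmono : StrictMono p := by
        intro i j hij
        have h1 : ψ (i+1) < ψ (j+1) := hψ (by omega)
        have h2 := hp1 i; have h3 := hp1 j; omega
      obtain ⟨v, _, θ, hθ, hvt⟩ :=
        tendsto_subseq_of_bounded (Metric.isBounded_Icc δ β) (fun k => hwmem (p k))
      refine ⟨v, cluster_of_subseq (hpmono.comp hθ) hvt, ?_⟩
      have h2 : Tendsto (fun j => Hf a (w (p (θ j)))) atTop (𝓝 (Hf a v)) :=
        (hcont.tendsto v).comp hvt
      have h3 : (fun j => Hf a (w (p (θ j)))) = fun j => (w ∘ ψ) (θ j + 1) := by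
        funext j
        show Hf a (w (p (θ j))) = w (ψ (θ j + 1))
        rw [← hp1 (θ j)]
        exact (hwstep (p (θ j))).symm
      rw [h3] at h2
      have h4 : Tendsto (fun j => (w ∘ ψ) (θ j + 1)) atTop (𝓝 z) := by
        apply hψt.comp
        exact tendsto_atTop_mono (fun j => Nat.le_succ_of_le hθ.le_apply) tendsto_id
      exact tendsto_nhds_unique h2 h4
    have hclosedΩ : IsClosed Ω := by
      have : Ω = {x | ClusterPt x (map w atTop)} := rfl
      rw [this]; exact isClosed_setOf_clusterPt
    have hbddB : BddBelow Ω := BddBelow.mono hΩIcc bddBelow_Icc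
    have hbddA : BddAbove Ω := BddAbove.mono hΩIcc bddAbove_Icc
    set lam := sInf Ω with hlam
    set mu := sSup Ω with hmu
    have hlamΩ : lam ∈ Ω := hclosedΩ.csInf_mem hneΩ hbddB
    have hmuΩ : mu ∈ Ω := hclosedΩ.csSup_mem hneΩ hbddA
    have hlam_le : ∀ z ∈ Ω, lam ≤ z := fun z hz => csInf_le hbddB hz
    have hle_mu : ∀ z ∈ Ω, z ≤ mu := fun z hz => le_csSup hbddA hz
    have hlam_pos : 0 < lam := lt_of_lt_of_le hδpos (hΩIcc hlamΩ).1
    have hmuβ : mu ≤ β := (hΩIcc hmuΩ).2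
    rcases eq_or_lt_of_le (hlam_le mu hmuΩ) with heq | hlt
    · -- Ω is a singleton
      have hsingle : ∀ z ∈ Ω, z = lam := fun z hz =>
        le_antisymm (heq ▸ hle_mu z hz) (hlam_le z hz)
      have hfixlam : Hf a lam = lam := hsingle _ (hforward lam hlamΩ)
      have hlamys : lam = S.ys := by
        rcases lt_trichotomy lam S.ys with h | h | h
        · exfalso; have := S.hkpos lam hlam_pos h; linarith
        · exact h
        · exfalso; have := S.hkneg lam h; linarith
      exact tendsto_of_cluster_unique hwmem (fun z hz => (hsingle z hz).trans hlamys)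
    · exfalso
      have hlamys : lam < S.ys := by
        by_contra hcon; push_neg at hcon
        obtain ⟨v, hvΩ, hv⟩ := hbackward mu hmuΩ
        have hmuys : S.ys < mu := lt_of_le_of_lt hcon hlt
        rcases eq_or_lt_of_le (le_trans hcon (hlam_le v hvΩ)) with h | h
        · rw [← h, S.hfix] at hv; linarith
        · have h1 := S.hkneg v h
          have h2 := hle_mu v hvΩ
          linarith
      have hysmu : S.ys < mu := by
        by_contra hcon; push_neg at hcon
        obtain ⟨v, hvΩ, hv⟩ := hbackward lam hlamΩ
        have hvys : v ≤ S.ys := le_trans (hle_mu v hvΩ) hcon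
        rcases eq_or_lt_of_le hvys with h | h
        · rw [h, S.hfix] at hv; linarith
        · have h1 := S.hkpos v (lt_of_lt_of_le hlam_pos (hlam_le v hvΩ)) h
          have h2 := hlam_le v hvΩ
          linarith
      have hHmu_mem : Hf a mu ∈ Ω := hforward mu hmuΩ
      obtain ⟨w2, hw2Ω, hw2⟩ := hbackward lam hlamΩ
      have hminend : min (Hf a lam) (Hf a mu) ≤ lam := by
        have key : min (Hf a lam) (Hf a mu) ≤ Hf a w2 := by
          rcases le_or_gt w2 S.c with h | h
          · have h1 : Hf a lam ≤ Hf a w2 :=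
              S.hmono.monotoneOn ⟨hlam_pos.le, le_trans (hlam_le w2 hw2Ω) h⟩
                ⟨(lt_of_lt_of_le hlam_pos (hlam_le w2 hw2Ω)).le, h⟩ (hlam_le w2 hw2Ω)
            exact le_trans (min_le_left _ _) h1
          · have h1 : Hf a mu ≤ Hf a w2 := by
              rcases eq_or_lt_of_le (hle_mu w2 hw2Ω) with he | hlt2
              · rw [he]
              · exact (S.hanti (mem_Ici.2 h.le)
                  (mem_Ici.2 (le_trans h.le (hle_mu w2 hw2Ω))) hlt2).le
            exact le_trans (min_le_right _ _) h1
        rw [hw2] at key; exact key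
      have hHlam : lam < Hf a lam := S.hkpos lam hlam_pos hlamys
      have hHmu_eq : Hf a mu = lam := by
        rcases le_total (Hf a lam) (Hf a mu) with h | h
        · exfalso
          rw [min_eq_left h] at hminend; linarith
        · rw [min_eq_right h] at hminend
          exact le_antisymm hminend (hlam_le _ hHmu_mem)
      obtain ⟨v, hvΩ, hv⟩ := hbackward mu hmuΩ
      rcases lt_trichotomy v S.ys with h | h | h
      · have hDv := S.hD v (lt_of_lt_of_le hlam_pos (hlam_le v hvΩ)) h
        rw [hv, hHmu_eq] at hDv
        exact absurd (hlam_le v hvΩ) (not_le.2 hDv)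
      · rw [h, S.hfix] at hv; linarith
      · have hlt3 : Hf a v < Hf a S.ys :=
          S.hanti (mem_Ici.2 hAB.le) (mem_Ici.2 (le_trans hAB.le h.le)) h
        rw [S.hfix, hv] at hlt3; linarith



lemma converge_signed {a : ℝ} (ha : 8 < a) (S : Setup a) {y0 : ℝ}
    (hgood : ∀ n, (Hf a)^[n] y0 ≠ 0) :
    Tendsto (fun n => (Hf a)^[n] y0) atTop (𝓝 S.ys) ∨
      Tendsto (fun n => (Hf a)^[n] y0) atTop (𝓝 (-S.ys)) := by
  have ha0 : (0:ℝ) < a := by linarith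
  set y : ℕ → ℝ := fun n => (Hf a)^[n] y0 with hy
  have hstep : ∀ n, y (n+1) = Hf a (y n) := by
    intro n; simp only [hy]; rw [Function.iterate_succ_apply']
  have hu0pos : 0 < S.u0 := lt_trans S.hys0 S.hysu
  -- descent into (-u0, u0)
  have hdesc : ∃ N, |y N| < S.u0 := by
    by_contra hcon
    push_neg at hcon
    have hgt : ∀ n, S.u0 < |y n| := by
      intro n
      rcases eq_or_lt_of_le (hcon n) with h | h
      · exfalso
        have h1 : |y (n+1)| = 0 := by
          rw [hstep, Hf_abs_abs, ← h, S.hHu0, abs_zero]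
        exact hgood (n+1) (abs_eq_zero.mp h1)
      · exact h
    have hkey : ∀ n, |y (n+1)| ≤ |y n| - S.u0 := by
      intro n
      have h1 : S.u0 < |y n| := hgt n
      have h2 : Hf a (|y n|) < 0 := S.hHneg _ h1
      have h3 : |y (n+1)| = -(Hf a (|y n|)) := by
        rw [hstep, Hf_abs_abs, abs_of_neg h2]
      have h4 : Ef S.u0 ≤ Ef (|y n|) := (Ef_strictMono h1).le
      have h5 : a * Ef S.u0 - a/2 = S.u0 := by
        have := S.hHu0; unfold Hf at this; linarith
      rw [h3]; unfold Hf; nlinarith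
    have hlin : ∀ n, |y n| ≤ |y 0| - n * S.u0 := by
      intro n; induction n with
      | zero => simp
      | succ m ih =>
        have := hkey m
        have : |y (m+1)| ≤ (|y 0| - m * S.u0) - S.u0 := by linarith
        have hcast : ((m+1 : ℕ) : ℝ) * S.u0 = (m : ℝ) * S.u0 + S.u0 := by push_cast; ring
        linarith
    obtain ⟨n, hn⟩ := exists_nat_gt (|y 0| / S.u0)
    have h6 : |y 0| < n * S.u0 := by
      rw [div_lt_iff₀ hu0pos] at hn; linarith
    have h7 := hlin n
    have h8 : (0:ℝ) ≤ |y n| := abs_nonneg _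
    linarith
  obtain ⟨N, hN⟩ := hdesc
  have hyN : y N ≠ 0 := hgood N
  rcases lt_trichotomy (y N) 0 with hsign | hsign | hsign
  · -- negative branch
    right
    set s : ℕ → ℝ := fun k => -(y (N + k)) with hsdef
    have hs : ∀ k, s (k+1) = Hf a (s k) := by
      intro k
      show -(y (N + (k+1))) = Hf a (-(y (N+k)))
      rw [Hf_odd, show N + (k+1) = (N+k)+1 from rfl, hstep]
    have hmem : ∀ k, 0 < s k ∧ s k < S.u0 := by
      intro k; induction k with
      | zero =>
        constructor
        · show 0 < -(y (N+0)); simp only [Nat.add_zero]; linarith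
        · show -(y (N+0)) < S.u0
          have : |y N| < S.u0 := hN
          rw [abs_lt] at this; simp only [Nat.add_zero]; linarith [this.1]
      | succ m ih =>
        rw [hs m]
        exact ⟨S.hHpos _ ih.1 ih.2, Hf_lt_u0 ha S _ ih.1.le ih.2⟩
    have hconv := core ha S hs hmem
    have hconv2 : Tendsto (fun k => y (N + k)) atTop (𝓝 (-S.ys)) := by
      have := hconv.neg
      simp only [hsdef, neg_neg] at this
      exact this
    have hcomm : (fun k => y (k + N)) = fun k => y (N + k) := by
      funext k; rw [Nat.add_comm]
    exact (tendsto_add_atTop_iff_nat N).mp (by rw [hcomm]; exact hconv2)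
  · exact absurd hsign hyN
  · left
    set s : ℕ → ℝ := fun k => y (N + k) with hsdef
    have hs : ∀ k, s (k+1) = Hf a (s k) := by
      intro k
      show y (N + (k+1)) = Hf a (y (N+k))
      rw [show N + (k+1) = (N+k)+1 from rfl, hstep]
    have hmem : ∀ k, 0 < s k ∧ s k < S.u0 := by
      intro k; induction k with
      | zero =>
        constructor
        · show 0 < y (N+0); simpa using hsign
        · show y (N+0) < S.u0
          have : |y N| < S.u0 := hN
          rw [abs_lt] at this; simpa using this.2
      | succ m ih =>
        rw [hs m]
        exact ⟨S.hHpos _ ih.1 ih.2, Hf_lt_u0 ha S _ ih.1.le ih.2⟩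
    have hconv := core ha S hs hmem
    have hcomm : (fun k => y (k + N)) = fun k => y (N + k) := by
      funext k; rw [Nat.add_comm]
    exact (tendsto_add_atTop_iff_nat N).mp (by rw [hcomm]; exact hconv)



lemma one_sub_Ef (z : ℝ) : 1 - Ef z = Real.exp (-z) * Ef z := by
  have h := Real.exp_pos (-z)
  rw [Ef]
  field_simp
  ring

lemma conj (a z : ℝ) : chaosMap a (1/2) (Ef z) = Ef (-(Hf a z)) := by
  have hE := Ef_pos z
  have hex := Real.exp_pos (Hf a z)
  have hden : Ef z + (1 - Ef z) * Real.exp (a * (Ef z - 1/2))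
      = Ef z * (1 + Real.exp (Hf a z)) := by
    rw [one_sub_Ef]
    have : Hf a z = a * (Ef z - 1/2) + (-z) := by rw [Hf]; ring
    rw [this, Real.exp_add]
    ring
  rw [chaosMap, hden]
  rw [show Ef (-(Hf a z)) = (1 + Real.exp (Hf a z))⁻¹ by rw [Ef, neg_neg]]
  rw [div_mul_cancel_left₀ (ne_of_gt hE)]

lemma iterate_conj (a z : ℝ) :
    ∀ n, (chaosMap a (1/2))^[n] (Ef z) = Ef ((-1)^n * (Hf a)^[n] z) := by
  intro n; induction n with
  | zero => simp
  | succ m ih =>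
    rw [Function.iterate_succ_apply', ih, conj, Function.iterate_succ_apply']
    rcases Nat.even_or_odd m with h | h
    · rw [h.neg_one_pow, one_mul]
      congr 1
      rw [(by exact Odd.neg_one_pow (Even.add_one h) : ((-1:ℝ))^(m+1) = -1)]
      ring
    · rw [h.neg_one_pow]
      rw [show (-1:ℝ) * (Hf a)^[m] z = -((Hf a)^[m] z) by ring, Hf_odd]
      congr 1
      rw [(by exact Even.neg_one_pow (Odd.add_one h) : ((-1:ℝ))^(m+1) = 1)]
      ring

lemma mono2 {a : ℝ} (S : Setup a) : StrictMonoOn (Hf a) (Icc (-S.c) S.c) := by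
  intro x hx y hy hxy
  have hx1 := hx.1; have hx2 := hx.2; have hy1 := hy.1; have hy2 := hy.2
  rcases le_or_gt y 0 with h | h
  · have h1 : Hf a (-y) < Hf a (-x) :=
      S.hmono ⟨by linarith, by linarith⟩ ⟨by linarith, by linarith⟩ (by linarith)
    have h2 := Hf_odd a x
    have h3 := Hf_odd a y
    linarith
  · rcases le_or_gt 0 x with h2 | h2
    · exact S.hmono ⟨h2, hx2⟩ ⟨h.le, hy2⟩ hxy
    · have h3 : Hf a 0 < Hf a (-x) :=
        S.hmono ⟨le_rfl, S.hc0.le⟩ ⟨by linarith, by linarith⟩ (by linarith)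
      have h4 : Hf a 0 < Hf a y :=
        S.hmono ⟨le_rfl, S.hc0.le⟩ ⟨h.le, hy2⟩ h
      rw [Hf_zero] at h3 h4
      have h5 := Hf_odd a x
      linarith


lemma fiber_ctble {a : ℝ} (S : Setup a) (z : ℝ) : {y : ℝ | Hf a y = z}.Countable := by
  classical
  have hsub : {y : ℝ | Hf a y = z} ⊆
      ({y : ℝ | Hf a y = z} ∩ Iic (-S.c)) ∪
        (({y : ℝ | Hf a y = z} ∩ Icc (-S.c) S.c) ∪ ({y : ℝ | Hf a y = z} ∩ Ici S.c)) := by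
    intro t ht
    rcases le_or_gt t (-S.c) with h | h
    · exact Or.inl ⟨ht, h⟩
    rcases le_or_gt t S.c with h2 | h2
    · exact Or.inr (Or.inl ⟨ht, ⟨h.le, h2⟩⟩)
    · exact Or.inr (Or.inr ⟨ht, h2.le⟩)
  apply Set.Countable.mono hsub
  apply Set.Countable.union
  · apply Set.Subsingleton.countable
    intro p hp q hq
    have h1 : Hf a (-p) = Hf a (-q) := by
      rw [Hf_odd, Hf_odd, hp.1, hq.1]
    have hp2 : p ≤ -S.c := hp.2
    have hq2 : q ≤ -S.c := hq.2
    have h2 : -p = -q :=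
      S.hanti.injOn (show -p ∈ Ici S.c by simp only [mem_Ici]; linarith)
        (show -q ∈ Ici S.c by simp only [mem_Ici]; linarith) h1
    linarith
  apply Set.Countable.union
  · exact Set.Subsingleton.countable fun p hp q hq =>
      (mono2 S).injOn hp.2 hq.2 (by rw [hp.1, hq.1])
  · exact Set.Subsingleton.countable fun p hp q hq =>
      S.hanti.injOn hp.2 hq.2 (by rw [hp.1, hq.1])

lemma zeros_ctble {a : ℝ} (S : Setup a) :
    (⋃ n : ℕ, ((Hf a)^[n]) ⁻¹' {0} : Set ℝ).Countable := by
  apply Set.countable_iUnion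
  intro n; induction n with
  | zero => simp
  | succ m ih =>
    have hEq : ((Hf a)^[m+1]) ⁻¹' {0} = ⋃ z ∈ ((Hf a)^[m]) ⁻¹' {0}, {y : ℝ | Hf a y = z} := by
      ext t
      simp only [Set.mem_preimage, Set.mem_singleton_iff, Set.mem_iUnion, Set.mem_setOf_eq,
        Function.iterate_succ_apply]
      constructor
      · intro h
        exact ⟨Hf a t, h, rfl⟩
      · rintro ⟨z, hz, rfl⟩
        exact hz
    rw [hEq]
    exact Set.Countable.biUnion ih (fun z _ => fiber_ctble S z)



end Chaos

open Chaos

/-- If `a > 8` then there is a unique `σ_a ∈ (0,1/2)` with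
`f_a(σ_a) = 1 - σ_a`, and for all `x ∈ (0,1)` outside a countable set the
even and odd subsequences of iterates converge to `σ_a` and `1 - σ_a` (in one
of the two orders), while every point of the countable exceptional set is
mapped to `1/2` by some iterate. -/
theorem stmt_11 (a : ℝ) (ha : 8 < a) :
    ∃ σ : ℝ, (σ ∈ Set.Ioo (0 : ℝ) (1 / 2) ∧ chaosMap a (1 / 2) σ = 1 - σ) ∧
      (∀ σ' : ℝ, σ' ∈ Set.Ioo (0 : ℝ) (1 / 2) → chaosMap a (1 / 2) σ' = 1 - σ' →
        σ' = σ) ∧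
      ∃ C : Set ℝ, C.Countable ∧ C ⊆ Set.Ioo (0 : ℝ) 1 ∧
        (∀ x ∈ Set.Ioo (0 : ℝ) 1 \ C,
          (Filter.Tendsto (fun n : ℕ => (chaosMap a (1 / 2))^[2 * n] x)
              Filter.atTop (nhds σ) ∧
            Filter.Tendsto (fun n : ℕ => (chaosMap a (1 / 2))^[2 * n + 1] x)
              Filter.atTop (nhds (1 - σ))) ∨
          (Filter.Tendsto (fun n : ℕ => (chaosMap a (1 / 2))^[2 * n] x)
              Filter.atTop (nhds (1 - σ)) ∧
            Filter.Tendsto (fun n : ℕ => (chaosMap a (1 / 2))^[2 * n + 1] x)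
              Filter.atTop (nhds σ))) ∧
        (∀ x ∈ C, ∃ n : ℕ, (chaosMap a (1 / 2))^[n] x = 1 / 2) := by
  obtain ⟨S⟩ := exists_setup ha
  set σ := Ef (-S.ys) with hσ
  have hEys : Ef S.ys = 1 - σ := by rw [hσ, Ef_neg]; ring
  have hσIoo : σ ∈ Ioo (0:ℝ) (1/2) := by
    constructor
    · exact Ef_pos _
    · have h := Ef_strictMono (neg_lt_zero.2 S.hys0)
      rw [Ef_zero] at h
      exact h
  refine ⟨σ, ⟨hσIoo, ?_⟩, ?_, ?_⟩
  · show chaosMap a (1/2) (Ef (-S.ys)) = 1 - σ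
    have h1 := conj a (-S.ys)
    rw [Hf_odd, S.hfix, neg_neg] at h1
    rw [h1, hEys]
  · intro σ' hσ' heq
    have hσ'2 : σ' ∈ Ioo (0:ℝ) 1 := ⟨hσ'.1, by have := hσ'.2; linarith⟩
    have hEz : Ef (Lf σ') = σ' := Ef_Lf hσ'2
    set z := Lf σ' with hz
    have hzneg : z < 0 := by
      rw [hz, Lf]
      apply Real.log_neg
      · exact div_pos hσ'.1 (by linarith [hσ'.2])
      · rw [div_lt_one (by linarith [hσ'.2])]; linarith [hσ'.2]
    have h2 : chaosMap a (1/2) (Ef z) = Ef (-z) := by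
      rw [hEz, heq, ← hEz, ← Ef_neg]
    rw [conj] at h2
    have h3 : Hf a z = z := by have := Ef_inj h2; linarith
    have h4 : Hf a (-z) = -z := by rw [Hf_odd, h3]
    have h5 : -z = S.ys := by
      rcases lt_trichotomy (-z) S.ys with h | h | h
      · exfalso; have := S.hkpos (-z) (by linarith) h; rw [h4] at this; linarith
      · exact h
      · exfalso; have := S.hkneg (-z) h; rw [h4] at this; linarith
    rw [← hEz, show z = -S.ys by linarith]
  · refine ⟨Ef '' (⋃ n : ℕ, ((Hf a)^[n]) ⁻¹' {0}), (zeros_ctble S).image Ef, ?_, ?_, ?_⟩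
    · rintro x ⟨w, _, rfl⟩; exact ⟨Ef_pos w, Ef_lt_one w⟩
    · intro x hx
      obtain ⟨hxI, hxC⟩ := hx
      have hgood : ∀ n, (Hf a)^[n] (Lf x) ≠ 0 := by
        intro n hn
        exact hxC ⟨Lf x, Set.mem_iUnion.2 ⟨n, by simpa using hn⟩, Ef_Lf hxI⟩
      have hx' : x = Ef (Lf x) := (Ef_Lf hxI).symm
      have htwo : Tendsto (fun n : ℕ => 2*n) atTop atTop := by
        apply tendsto_atTop_mono (f := fun n : ℕ => n)
        · intro n; omega
        · exact tendsto_id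
      have htwo1 : Tendsto (fun n : ℕ => 2*n+1) atTop atTop := by
        apply tendsto_atTop_mono (f := fun n : ℕ => n)
        · intro n; omega
        · exact tendsto_id
      have heven : ∀ L : ℝ, Tendsto (fun n => (Hf a)^[n] (Lf x)) atTop (𝓝 L) →
          Tendsto (fun n : ℕ => (chaosMap a (1/2))^[2*n] x) atTop (𝓝 (Ef L)) := by
        intro L hL
        have h1 : (fun n : ℕ => (chaosMap a (1/2))^[2*n] x)
            = fun n : ℕ => Ef ((Hf a)^[2*n] (Lf x)) := by
          funext n
          conv_lhs => rw [hx']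
          rw [iterate_conj]
          congr 1
          rw [pow_mul]; norm_num
        rw [h1]
        exact (Ef_cont.tendsto L).comp (hL.comp htwo)
      have hodd : ∀ L : ℝ, Tendsto (fun n => (Hf a)^[n] (Lf x)) atTop (𝓝 L) →
          Tendsto (fun n : ℕ => (chaosMap a (1/2))^[2*n+1] x) atTop (𝓝 (Ef (-L))) := by
        intro L hL
        have h1 : (fun n : ℕ => (chaosMap a (1/2))^[2*n+1] x)
            = fun n : ℕ => Ef (-((Hf a)^[2*n+1] (Lf x))) := by
          funext n
          conv_lhs => rw [hx']
          rw [iterate_conj]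
          congr 1
          rw [pow_succ, pow_mul]; norm_num
        rw [h1]
        exact (Ef_cont.tendsto (-L)).comp ((hL.comp htwo1).neg)
      rcases converge_signed ha S hgood with hc | hc
      · right
        constructor
        · have h := heven _ hc; rw [hEys] at h; exact h
        · exact hodd _ hc
      · left
        constructor
        · exact heven _ hc
        · have h := hodd _ hc
          rw [neg_neg, hEys] at h
          exact h
    · rintro x ⟨w, hw, rfl⟩
      obtain ⟨n, hn⟩ := Set.mem_iUnion.1 hw
      refine ⟨n, ?_⟩
      rw [iterate_conj]
      have hzero : (Hf a)^[n] w = 0 := by simpa using hn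
      rw [hzero, mul_zero, Ef_zero]
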